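/- Let Ω ⊂ ℝ² be a bounded smooth domain and u ∈ W^{2,1}_2(Ω × [0,T], ℝ²) with ∇·u = 0. Let d ∈ C^{2+α, 1+α/2}(Ω̄ × [0,T], S²) solve ∂_t d + u·∇d = Δd + |∇d|² d with boundary value h and initial value d₀. If the third component satisfies d₀³ ≥ 0 in Ω and h³ ≥ 0 on Γ × (0,T), then d³(x,t) ≥ 0 for all (x,t) ∈ Ω × [0,T]. -/

import Mathlib

noncomputable section

open Set

abbrev E2 : Type := EuclideanSpace ℝ (Fin 2)
abbrev E3 : Type := EuclideanSpace ℝ (Fin 3)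

/-- Spatial partial derivative in the `i`-th coordinate direction. -/
def pd {n : ℕ} {F : Type*} [NormedAddCommGroup F] [NormedSpace ℝ F]
    (f : EuclideanSpace ℝ (Fin n) → F) (x : EuclideanSpace ℝ (Fin n)) (i : Fin n) : F :=
  fderiv ℝ f x (EuclideanSpace.single i 1)

/-- The Laplacian `Δf = ∑ᵢ ∂ᵢᵢ f`. -/
def lap {n : ℕ} {F : Type*} [NormedAddCommGroup F] [NormedSpace ℝ F]
    (f : EuclideanSpace ℝ (Fin n) → F) (x : EuclideanSpace ℝ (Fin n)) : F :=
  ∑ i, pd (fun y => pd f y i) x i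

/-- The squared gradient `|∇f|² = ∑ᵢ |∂ᵢ f|²`. -/
def gradSq {n : ℕ} {F : Type*} [NormedAddCommGroup F] [NormedSpace ℝ F]
    (f : EuclideanSpace ℝ (Fin n) → F) (x : EuclideanSpace ℝ (Fin n)) : ℝ :=
  ∑ i, ‖pd f x i‖ ^ 2

/-- The divergence `∇·u = ∑ᵢ ∂ᵢ uⁱ`. -/
def divg {n : ℕ} (u : EuclideanSpace ℝ (Fin n) → EuclideanSpace ℝ (Fin n))
    (x : EuclideanSpace ℝ (Fin n)) : ℝ :=
  ∑ i, pd u x i i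

open Filter

/-- 1D second derivative test: at a local minimum, the second derivative is nonnegative. -/
lemma aux_second_deriv_nonneg {g : ℝ → ℝ} {c : ℝ}
    (hmin : IsLocalMin g 0) (hg : ContDiffAt ℝ 2 g 0)
    (hc : HasDerivAt (deriv g) c 0) : 0 ≤ c := by
  by_contra hneg
  push_neg at hneg
  have h0 : deriv g 0 = 0 := hmin.deriv_eq_zero
  have hslope : Tendsto (slope (deriv g) 0) (nhdsWithin 0 (Ioi 0)) (nhds c) :=
    (hasDerivAt_iff_tendsto_slope.mp hc).mono_left
      (nhdsWithin_mono _ (fun x hx => ne_of_gt hx))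
  have hE1 : ∀ᶠ x in nhdsWithin (0:ℝ) (Ioi 0), deriv g x < 0 := by
    filter_upwards [hslope.eventually_lt_const hneg, self_mem_nhdsWithin] with x hx hx'
    have hx'' : (0:ℝ) < x := hx'
    have : slope (deriv g) 0 x = deriv g x / x := by
      simp [slope_def_field, h0]
    rw [this] at hx
    rcases div_neg_iff.mp hx with h | h
    · linarith [h.2]
    · exact h.1
  obtain ⟨U, hU, hgU⟩ := hg.contDiffOn (m := 1) (by norm_num) (by simp)
  obtain ⟨r, hr, hball⟩ := Metric.mem_nhds_iff.mp hU
  have hE2 : ∀ᶠ x in nhdsWithin (0:ℝ) (Ioi 0), g 0 ≤ g x :=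
    hmin.filter_mono nhdsWithin_le_nhds
  obtain ⟨u, hu, huo⟩ := mem_nhdsGT_iff_exists_Ioo_subset.mp (hE1.and hE2)
  set x := min (u/2) (r/2) with hx
  have hx0 : 0 < x := lt_min (by linarith [mem_Ioi.mp hu]) (by linarith)
  have hxu : x < u := lt_of_le_of_lt (min_le_left _ _) (by linarith [mem_Ioi.mp hu])
  have hsub : Icc (0:ℝ) x ⊆ U := by
    intro y hy
    apply hball
    have : |y| < r := by
      rw [abs_lt]
      constructor <;> [linarith [hy.1]; exact lt_of_le_of_lt hy.2 (lt_of_le_of_lt (min_le_right _ _) (by linarith))]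
    simpa [Real.dist_eq] using this
  have hanti : StrictAntiOn g (Icc 0 x) := by
    apply strictAntiOn_of_deriv_neg (convex_Icc 0 x) (hgU.continuousOn.mono hsub)
    intro y hy
    rw [interior_Icc] at hy
    exact (huo ⟨hy.1, lt_trans hy.2 hxu⟩).1
  have h1 : g x < g 0 := hanti ⟨le_refl 0, hx0.le⟩ ⟨hx0.le, le_refl x⟩ hx0
  have h2 : g 0 ≤ g x := (huo ⟨hx0, hxu⟩).2
  linarith

/-- At a local minimum of a `C²` function, each pure second partial is nonnegative. -/
lemma aux_pd2_nonneg {n : ℕ} {φ : EuclideanSpace ℝ (Fin n) → ℝ}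
    {x0 : EuclideanSpace ℝ (Fin n)}
    (hmin : IsLocalMin φ x0) (hφ : ContDiffAt ℝ 2 φ x0) (i : Fin n) :
    0 ≤ pd (fun y => pd φ y i) x0 i := by
  set e : EuclideanSpace ℝ (Fin n) := EuclideanSpace.single i 1 with he
  set L : ℝ → EuclideanSpace ℝ (Fin n) := fun s => x0 + s • e with hLdef
  have hL0 : L 0 = x0 := by simp [hLdef]
  have hL : ∀ s : ℝ, HasDerivAt L e s := by
    intro s
    have h1 : HasDerivAt (fun s : ℝ => s • e) ((1:ℝ) • e) s := (hasDerivAt_id s).smul_const e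
    have h2 := h1.const_add x0
    rw [one_smul] at h2
    exact h2
  have hLsmooth : ContDiff ℝ 2 L := contDiff_const.add (contDiff_id.smul contDiff_const)
  have htend : Tendsto L (nhds 0) (nhds x0) := by
    have := hLsmooth.continuous.tendsto 0
    rwa [hL0] at this
  set g : ℝ → ℝ := fun s => φ (L s) with hgdef
  have hming : IsLocalMin g 0 := by
    have : ∀ᶠ s in nhds (0:ℝ), φ x0 ≤ φ (L s) := htend.eventually hmin
    simpa [IsLocalMin, IsMinFilter, hgdef, hL0] using this
  have hg2 : ContDiffAt ℝ 2 g 0 := by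
    have h := hφ
    rw [← hL0] at h
    exact h.comp 0 hLsmooth.contDiffAt
  have hev : ∀ᶠ y in nhds x0, ContDiffAt ℝ 2 φ y := hφ.eventually (by simp)
  have hevs : ∀ᶠ s in nhds (0:ℝ), ContDiffAt ℝ 2 φ (L s) := htend.eventually hev
  have heq : (deriv g) =ᶠ[nhds (0:ℝ)] fun s => pd φ (L s) i := by
    filter_upwards [hevs] with s hs
    have hdφ : DifferentiableAt ℝ φ (L s) := hs.differentiableAt (by norm_num)
    have : HasDerivAt g (fderiv ℝ φ (L s) e) s :=
      hdφ.hasFDerivAt.comp_hasDerivAt s (hL s)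
    exact this.deriv
  have hd1 : ContDiffAt ℝ 1 (fderiv ℝ φ) x0 := hφ.fderiv_right (by norm_num)
  have hdiffpd : DifferentiableAt ℝ (fun y => pd φ y i) x0 := by
    have : DifferentiableAt ℝ (fun y => (fderiv ℝ φ y) e) x0 :=
      (hd1.differentiableAt (by norm_num)).clm_apply (differentiableAt_const e)
    exact this
  have hkey : HasDerivAt (fun s => pd φ (L s) i) (pd (fun y => pd φ y i) x0 i) 0 := by
    have h' := hdiffpd.hasFDerivAt
    rw [← hL0] at h'
    have h2 := h'.comp_hasDerivAt 0 (hL 0)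
    have h3 : HasDerivAt (fun s => pd φ (L s) i) (fderiv ℝ (fun y => pd φ y i) (L 0) e) 0 := h2
    rw [hL0] at h3
    exact h3
  have : HasDerivAt (deriv g) (pd (fun y => pd φ y i) x0 i) 0 :=
    hkey.congr_of_eventuallyEq heq
  exact aux_second_deriv_nonneg hming hg2 this

lemma pd_congr {n : ℕ} {F : Type*} [NormedAddCommGroup F] [NormedSpace ℝ F]
    {f g : EuclideanSpace ℝ (Fin n) → F} {x : EuclideanSpace ℝ (Fin n)}
    (h : f =ᶠ[nhds x] g) (i : Fin n) : pd f x i = pd g x i := by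
  unfold pd
  rw [h.fderiv_eq]

lemma aux_fderiv_comp {n m : ℕ} {f : EuclideanSpace ℝ (Fin n) → EuclideanSpace ℝ (Fin m)}
    {x : EuclideanSpace ℝ (Fin n)} (hf : DifferentiableAt ℝ f x) (j : Fin m)
    (v : EuclideanSpace ℝ (Fin n)) :
    fderiv ℝ (fun y => f y j) x v = fderiv ℝ f x v j := by
  have h := ((EuclideanSpace.proj (𝕜 := ℝ) j).hasFDerivAt (x := f x)).comp x hf.hasFDerivAt
  have h2 : fderiv ℝ (fun y => f y j) x = (EuclideanSpace.proj j).comp (fderiv ℝ f x) := h.fderiv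
  rw [h2]
  rfl

lemma aux_pd_comp {n m : ℕ} {f : EuclideanSpace ℝ (Fin n) → EuclideanSpace ℝ (Fin m)}
    {x : EuclideanSpace ℝ (Fin n)} (hf : DifferentiableAt ℝ f x) (i : Fin n) (j : Fin m) :
    pd (fun y => f y j) x i = pd f x i j :=
  aux_fderiv_comp hf j _

lemma aux_lap_comp {n m : ℕ} {f : EuclideanSpace ℝ (Fin n) → EuclideanSpace ℝ (Fin m)}
    {x : EuclideanSpace ℝ (Fin n)} (hf : ContDiffAt ℝ 2 f x) (j : Fin m) :
    lap (fun y => f y j) x = lap f x j := by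
  have hterm : ∀ i : Fin n,
      pd (fun y => pd (fun z => f z j) y i) x i = pd (fun y => pd f y i) x i j := by
    intro i
    have hev : ∀ᶠ y in nhds x, ContDiffAt ℝ 2 f y := hf.eventually (by simp)
    have heq : (fun y => pd (fun z => f z j) y i) =ᶠ[nhds x] (fun y => pd f y i j) := by
      filter_upwards [hev] with y hy
      exact aux_pd_comp (hy.differentiableAt (by norm_num)) i j
    rw [pd_congr heq i]
    have hdiffpd : DifferentiableAt ℝ (fun y => pd f y i) x := by
      have : DifferentiableAt ℝ (fun y => (fderiv ℝ f y) (EuclideanSpace.single i 1)) x :=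
        ((hf.fderiv_right (m := 1) (by norm_num)).differentiableAt (by norm_num)).clm_apply
          (differentiableAt_const _)
      exact this
    exact aux_pd_comp hdiffpd i j
  unfold lap
  rw [Finset.sum_congr rfl (fun i _ => hterm i)]
  exact (map_sum (EuclideanSpace.proj j) _ _).symm

/-- Derivative at a right-endpoint minimum is nonpositive. -/
lemma aux_deriv_nonpos_right {g : ℝ → ℝ} {t0 m : ℝ} (ht0 : 0 < t0)
    (hmin : ∀ s ∈ Icc 0 t0, g t0 ≤ g s) (hder : HasDerivAt g m t0) : m ≤ 0 := by
  have hslope : Tendsto (slope g t0) (nhdsWithin t0 (Iio t0)) (nhds m) :=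
    (hasDerivAt_iff_tendsto_slope.mp hder).mono_left
      (nhdsWithin_mono _ (fun x hx => ne_of_lt hx))
  refine le_of_tendsto hslope ?_
  filter_upwards [Ioo_mem_nhdsLT_of_mem (show t0 ∈ Ioc 0 t0 from ⟨ht0, le_refl _⟩)] with s hs
  have h1 : g t0 ≤ g s := hmin s ⟨hs.1.le, hs.2.le⟩
  rw [slope_def_field]
  exact div_nonpos_of_nonneg_of_nonpos (by linarith) (by linarith [hs.2])

lemma aux_E3_component {a b c : E3} {g : ℝ} {dd : E3} (h : a + b = c + g • dd) (j : Fin 3) :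
    a j + b j = c j + g * dd j := by
  have := congrArg (fun q : E3 => q j) h
  simpa using this

set_option maxHeartbeats 2000000 in
/-- **Preservation of the upper hemisphere.**  Let `Ω ⊂ ℝ²` be a bounded open
(smooth) domain, `u` divergence-free (of class `W^{2,1}_2`, encoded by `C¹` spatial
regularity), and `d : Ω̄ × [0,T] → S² ⊂ ℝ³` a solution (of class `C^{2+α,1+α/2}`,
encoded by continuity up to the boundary, interior regularity and a gradient bound)
of `∂ₜ d + u·∇d = Δd + |∇d|² d` with boundary value `h` and initial value `d₀`.
If the third components satisfy `d₀³ ≥ 0` in `Ω̄` and `h³ ≥ 0` on `∂Ω × [0,T]`,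
then `d³(x,t) ≥ 0` for all `(x,t) ∈ Ω̄ × [0,T]`. -/
theorem third_component_nonneg_preserved
    (Ω : Set E2) (T : ℝ) (hΩo : IsOpen Ω) (hΩb : Bornology.IsBounded Ω) (hT : 0 < T)
    (u : E2 × ℝ → E2) (d : E2 × ℝ → E3)
    (hu_reg : ∀ t ∈ Ioo 0 T, ∀ x ∈ Ω, ContDiffAt ℝ 1 (fun y => u (y, t)) x)
    (hdiv : ∀ t ∈ Ioo 0 T, ∀ x ∈ Ω, divg (fun y => u (y, t)) x = 0)
    (hd_cont : ContinuousOn d (closure Ω ×ˢ Icc 0 T))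
    (hd_x : ∀ t ∈ Ioo 0 T, ∀ x ∈ Ω, ContDiffAt ℝ 2 (fun y => d (y, t)) x)
    (hd_t : ∀ t ∈ Ioo 0 T, ∀ x ∈ Ω, DifferentiableAt ℝ (fun s => d (x, s)) t)
    (hd_unit : ∀ x ∈ closure Ω, ∀ t ∈ Icc (0 : ℝ) T, ‖d (x, t)‖ = 1)
    (hgrad_bdd : ∃ K : ℝ, ∀ t ∈ Ioo 0 T, ∀ x ∈ Ω, gradSq (fun y => d (y, t)) x ≤ K)
    (hpde : ∀ t ∈ Ioo 0 T, ∀ x ∈ Ω,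
      deriv (fun s => d (x, s)) t + fderiv ℝ (fun y => d (y, t)) x (u (x, t))
        = lap (fun y => d (y, t)) x + gradSq (fun y => d (y, t)) x • d (x, t))
    (hbdry : ∀ x ∈ frontier Ω, ∀ t ∈ Icc (0 : ℝ) T, 0 ≤ d (x, t) 2)
    (hinit : ∀ x ∈ closure Ω, 0 ≤ d (x, 0) 2) :
    ∀ x ∈ closure Ω, ∀ t ∈ Icc (0 : ℝ) T, 0 ≤ d (x, t) 2 := by
  obtain ⟨K, hK⟩ := hgrad_bdd
  set lam : ℝ := K + 1 with hlam
  -- main claim: nonnegativity on every strictly shorter time slab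
  have claim : ∀ T' : ℝ, 0 < T' → T' < T →
      ∀ x ∈ closure Ω, ∀ t ∈ Icc (0:ℝ) T', 0 ≤ d (x, t) 2 := by
    intro T' hT'0 hT'T x hx t ht
    set v : E2 × ℝ → ℝ := fun p => Real.exp (-lam * p.2) * d p 2 with hvdef
    set S : Set (E2 × ℝ) := closure Ω ×ˢ Icc 0 T' with hSdef
    have hSsub : S ⊆ closure Ω ×ˢ Icc 0 T :=
      prod_mono_right (Icc_subset_Icc le_rfl hT'T.le)
    have hScomp : IsCompact S :=
      (Metric.isCompact_of_isClosed_isBounded isClosed_closure hΩb.closure).prod isCompact_Icc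
    have hSne : S.Nonempty := ⟨(x, 0), hx, le_refl 0, hT'0.le⟩
    have hvcont : ContinuousOn v S := by
      apply ContinuousOn.mul
      · exact (Real.continuous_exp.comp (continuous_const.mul continuous_snd)).continuousOn
      · exact (EuclideanSpace.proj (2 : Fin 3)).continuous.comp_continuousOn
          (hd_cont.mono hSsub)
    obtain ⟨⟨x0, t0⟩, hp, hminOn⟩ := hScomp.exists_isMinOn hSne hvcont
    -- suffices to show the minimum value is nonnegative
    suffices hv0 : 0 ≤ v (x0, t0) by
      have h1 : v (x0, t0) ≤ v (x, t) := hminOn ⟨hx, ht⟩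
      have h2 : 0 ≤ v (x, t) := le_trans hv0 h1
      have h3 : (0:ℝ) < Real.exp (-lam * t) := Real.exp_pos _
      have h4 : v (x, t) = Real.exp (-lam * t) * d (x, t) 2 := rfl
      rw [h4] at h2
      by_contra hcon
      push_neg at hcon
      nlinarith
    by_contra hneg
    push_neg at hneg
    have hexp : (0:ℝ) < Real.exp (-lam * t0) := Real.exp_pos _
    have hv00 : v (x0, t0) = Real.exp (-lam * t0) * d (x0, t0) 2 := rfl
    have hw0 : d (x0, t0) 2 < 0 := by
      rw [hv00] at hneg
      nlinarith
    have hx0cl : x0 ∈ closure Ω := hp.1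
    have ht0mem : t0 ∈ Icc (0:ℝ) T' := hp.2
    have ht0T : t0 ∈ Icc (0:ℝ) T := ⟨ht0mem.1, le_trans ht0mem.2 hT'T.le⟩
    -- x0 is interior
    have hx0Ω : x0 ∈ Ω := by
      by_contra hxΩ
      have hfr : x0 ∈ frontier Ω := by
        rw [hΩo.frontier_eq]
        exact ⟨hx0cl, hxΩ⟩
      exact absurd (hbdry x0 hfr t0 ht0T) (not_le.mpr hw0)
    -- t0 is positive
    have ht0pos : 0 < t0 := by
      rcases eq_or_lt_of_le ht0mem.1 with h | h
      · exact absurd (hinit x0 hx0cl) (not_le.mpr (by rwa [← h] at hw0))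
      · exact h
    have ht0Ioo : t0 ∈ Ioo (0:ℝ) T := ⟨ht0pos, lt_of_le_of_lt ht0mem.2 hT'T⟩
    set f : E2 → E3 := fun y => d (y, t0) with hfdef
    set φ : E2 → ℝ := fun y => d (y, t0) 2 with hφdef
    have hf2 : ContDiffAt ℝ 2 f x0 := hd_x t0 ht0Ioo x0 hx0Ω
    have hφ2 : ContDiffAt ℝ 2 φ x0 := by
      have h := (EuclideanSpace.proj (𝕜 := ℝ) (2 : Fin 3)).contDiff.contDiffAt.comp x0 hf2
      exact h
    -- x0 is a local minimum of φ
    have hminφ : IsLocalMin φ x0 := by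
      have hnb : Ω ∈ nhds x0 := hΩo.mem_nhds hx0Ω
      filter_upwards [hnb] with y hy
      have h1 : v (x0, t0) ≤ v (y, t0) := hminOn ⟨subset_closure hy, ht0mem⟩
      have := (mul_le_mul_iff_right₀ hexp).mp h1
      exact this
    have hgrad0 : fderiv ℝ φ x0 = 0 := hminφ.fderiv_eq_zero
    -- component facts
    have hBzero : fderiv ℝ f x0 (u (x0, t0)) 2 = 0 := by
      rw [← aux_fderiv_comp (hf2.differentiableAt (by norm_num)) 2 (u (x0, t0))]
      rw [show (fun y => f y 2) = φ from rfl, hgrad0]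
      rfl
    have hlapnn : 0 ≤ lap f x0 2 := by
      rw [← aux_lap_comp hf2 2]
      have : lap (fun y => f y 2) x0 = ∑ i, pd (fun y => pd φ y i) x0 i := rfl
      rw [this]
      exact Finset.sum_nonneg (fun i _ => aux_pd2_nonneg hminφ hφ2 i)
    -- time derivative
    have hDt : DifferentiableAt ℝ (fun s => d (x0, s)) t0 := hd_t t0 ht0Ioo x0 hx0Ω
    have hw' : HasDerivAt (fun s => d (x0, s) 2)
        ((deriv (fun s => d (x0, s)) t0) 2) t0 := by
      have h := ((EuclideanSpace.proj (𝕜 := ℝ) (2 : Fin 3)).hasFDerivAt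
        (x := d (x0, t0))).comp_hasDerivAt t0 hDt.hasDerivAt
      exact h
    set w : ℝ := d (x0, t0) 2 with hwdef
    set w' : ℝ := (deriv (fun s => d (x0, s)) t0) 2 with hw'def
    -- derivative of the weighted function at t0
    have hexpder : HasDerivAt (fun s => Real.exp (-lam * s)) (Real.exp (-lam * t0) * -lam) t0 := by
      have h1 : HasDerivAt (fun s : ℝ => -lam * s) (-lam) t0 := by
        simpa using (hasDerivAt_id t0).const_mul (-lam)
      exact h1.exp
    have hveq : (fun s => v (x0, s)) = (fun s => Real.exp (-lam * s) * d (x0, s) 2) := rfl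
    have hgder : HasDerivAt (fun s => v (x0, s))
        (Real.exp (-lam * t0) * -lam * w + Real.exp (-lam * t0) * w') t0 := by
      rw [hveq]
      exact hexpder.mul hw'
    have hmint : ∀ s ∈ Icc 0 t0, v (x0, t0) ≤ v (x0, s) := by
      intro s hs
      exact hminOn ⟨hx0cl, hs.1, le_trans hs.2 ht0mem.2⟩
    have hder_nonpos := aux_deriv_nonpos_right (g := fun s => v (x0, s)) ht0pos hmint hgder
    -- so w' ≤ lam * w
    have hwle : w' ≤ lam * w := by nlinarith
    -- PDE at (x0, t0), third component
    have hpde' := hpde t0 ht0Ioo x0 hx0Ω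
    have hcomp := aux_E3_component hpde' 2
    -- identify terms
    have hG : gradSq (fun y => d (y, t0)) x0 ≤ K := hK t0 ht0Ioo x0 hx0Ω
    have hGw : K * w ≤ gradSq (fun y => d (y, t0)) x0 * w :=
      mul_le_mul_of_nonpos_right hG hw0.le
    rw [hBzero] at hcomp
    -- hcomp : w' + 0 = lap f x0 2 + G * w
    have : w' = lap f x0 2 + gradSq (fun y => d (y, t0)) x0 * w := by
      rw [← hcomp]; ring
    nlinarith
  -- conclude for all t ∈ Icc 0 T
  have hIco : ∀ x ∈ closure Ω, ∀ t ∈ Ico (0:ℝ) T, 0 ≤ d (x, t) 2 := by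
    intro x hx t ht
    exact claim ((t + T) / 2) (by linarith [ht.1]) (by linarith [ht.2]) x hx t
      ⟨ht.1, by linarith [ht.2]⟩
  intro x hx t ht
  rcases lt_or_eq_of_le ht.2 with h | h
  · exact hIco x hx t ⟨ht.1, h⟩
  · rw [h]
    -- continuity at t = T
    have hcw : ContinuousWithinAt d (closure Ω ×ˢ Icc 0 T) (x, T) :=
      hd_cont (x, T) ⟨hx, le_of_lt hT, le_refl T⟩
    have hmap : MapsTo (fun s : ℝ => (x, s)) (Icc 0 T) (closure Ω ×ˢ Icc 0 T) :=
      fun s hs => ⟨hx, hs⟩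
    have hcw2 : ContinuousWithinAt (fun s => d (x, s)) (Icc 0 T) T :=
      hcw.comp ((continuous_const.prodMk continuous_id).continuousWithinAt) hmap
    have hcw3 : ContinuousWithinAt (fun s => d (x, s) 2) (Icc 0 T) T :=
      ((EuclideanSpace.proj (𝕜 := ℝ) (2 : Fin 3)).continuous.continuousAt).comp_continuousWithinAt hcw2
    have hne : (nhdsWithin T (Ico 0 T)).NeBot := by
      apply mem_closure_iff_nhdsWithin_neBot.mp
      rw [closure_Ico (ne_of_lt hT)]
      exact ⟨hT.le, le_refl T⟩
    have htend : Tendsto (fun s => d (x, s) 2) (nhdsWithin T (Ico 0 T)) (nhds (d (x, T) 2)) :=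
      hcw3.mono_left (nhdsWithin_mono _ Ico_subset_Icc_self)
    refine ge_of_tendsto htend ?_
    filter_upwards [self_mem_nhdsWithin] with s hs
    exact hIco x hx s hs
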